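/- Let K be an isolated non-saddle compact invariant set and x ∈ M∖K. Then: (i) x ∈ A(K) if and only if J⁺(x) ≠ ∅ and J⁺(x) ⊆ K; (ii) x ∈ R(K) if and only if J⁻(x) ≠ ∅ and J⁻(x) ⊆ K. -/

import Mathlib

open Set Filter Topology

variable {M : Type*}

/-- The positive semi-trajectory `γ⁺(x)`. -/
def posOrbit [TopologicalSpace M] (φ : Flow ℝ M) (x : M) : Set M :=
  {y | ∃ t : ℝ, 0 ≤ t ∧ φ t x = y}

/-- The negative semi-trajectory `γ⁻(x)`. -/
def negOrbit [TopologicalSpace M] (φ : Flow ℝ M) (x : M) : Set M :=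
  {y | ∃ t : ℝ, t ≤ 0 ∧ φ t x = y}

/-- The omega-limit set `ω(x) = ⋂_{t>0} closure (x·[t,∞))`. -/
def omegaLim [TopologicalSpace M] (φ : Flow ℝ M) (x : M) : Set M :=
  ⋂ t ∈ Set.Ioi (0:ℝ), closure {y | ∃ s : ℝ, t ≤ s ∧ φ s x = y}

/-- The negative omega-limit set `ω*(x) = ⋂_{t<0} closure (x·(-∞,t])`. -/
def alphaLim [TopologicalSpace M] (φ : Flow ℝ M) (x : M) : Set M :=
  ⋂ t ∈ Set.Iio (0:ℝ), closure {y | ∃ s : ℝ, s ≤ t ∧ φ s x = y}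

/-- `K` is invariant under the flow. -/
def FlowInvariant [TopologicalSpace M] (φ : Flow ℝ M) (K : Set M) : Prop :=
  ∀ x ∈ K, ∀ t : ℝ, φ t x ∈ K

/-- `K` is a compact invariant set which is the maximal invariant subset of some
compact neighborhood (an isolated invariant compactum). -/
def IsIsolatedInv [TopologicalSpace M] (φ : Flow ℝ M) (K : Set M) : Prop :=
  IsCompact K ∧ FlowInvariant φ K ∧
    ∃ N : Set M, IsCompact N ∧ K ⊆ interior N ∧
      ∀ x ∈ N, (∀ t : ℝ, φ t x ∈ N) → x ∈ K

/-- `K` is saddle: it admits a neighborhood `U` such that every neighborhood `V` of `K`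
contains a point whose positive and negative semi-trajectories both leave `U`. -/
def Saddle [TopologicalSpace M] (φ : Flow ℝ M) (K : Set M) : Prop :=
  ∃ U : Set M, K ⊆ interior U ∧ ∀ V : Set M, K ⊆ interior V →
    ∃ x ∈ V, ¬ posOrbit φ x ⊆ U ∧ ¬ negOrbit φ x ⊆ U

/-- `K` is non-saddle: every neighborhood `U` of `K` contains a neighborhood `V` of `K`
such that every point of `V` has `γ⁺(x) ⊆ U` or `γ⁻(x) ⊆ U`. -/
def NonSaddle [TopologicalSpace M] (φ : Flow ℝ M) (K : Set M) : Prop :=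
  ∀ U : Set M, K ⊆ interior U → ∃ V : Set M, K ⊆ interior V ∧ V ⊆ U ∧
    ∀ x ∈ V, posOrbit φ x ⊆ U ∨ negOrbit φ x ⊆ U

/-- The stable manifold (region of attraction) `A(K)`. -/
def Aset [TopologicalSpace M] (φ : Flow ℝ M) (K : Set M) : Set M :=
  {x | (omegaLim φ x).Nonempty ∧ omegaLim φ x ⊆ K}

/-- The unstable manifold (region of repulsion) `R(K)`. -/
def Rset [TopologicalSpace M] (φ : Flow ℝ M) (K : Set M) : Set M :=
  {x | (alphaLim φ x).Nonempty ∧ alphaLim φ x ⊆ K}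

/-- The region of influence `I(K) = A(K) ∪ R(K)`. -/
def Iset [TopologicalSpace M] (φ : Flow ℝ M) (K : Set M) : Set M :=
  Aset φ K ∪ Rset φ K

/-- `H(K) = A(K) ∩ R(K)`. -/
def Hset [TopologicalSpace M] (φ : Flow ℝ M) (K : Set M) : Set M :=
  Aset φ K ∩ Rset φ K

/-- The positive prolongational limit set `J⁺(x)`. -/
def Jplus [TopologicalSpace M] (φ : Flow ℝ M) (x : M) : Set M :=
  {y | ∃ (xs : ℕ → M) (ts : ℕ → ℝ), Tendsto xs atTop (𝓝 x) ∧
    Tendsto ts atTop atTop ∧ Tendsto (fun n => φ (ts n) (xs n)) atTop (𝓝 y)}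

/-- The negative prolongational limit set `J⁻(x)`. -/
def Jminus [TopologicalSpace M] (φ : Flow ℝ M) (x : M) : Set M :=
  {y | ∃ (xs : ℕ → M) (ts : ℕ → ℝ), Tendsto xs atTop (𝓝 x) ∧
    Tendsto ts atTop atBot ∧ Tendsto (fun n => φ (ts n) (xs n)) atTop (𝓝 y)}

/-- The two-sided prolongational limit set `J*(x)`. -/
def Jstar [TopologicalSpace M] (φ : Flow ℝ M) (x : M) : Set (M × M) :=
  {p | ∃ (xs : ℕ → M) (ts ss : ℕ → ℝ), Tendsto xs atTop (𝓝 x) ∧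
    Tendsto ts atTop atTop ∧ Tendsto ss atTop atBot ∧
    Tendsto (fun n => φ (ts n) (xs n)) atTop (𝓝 p.1) ∧
    Tendsto (fun n => φ (ss n) (xs n)) atTop (𝓝 p.2)}

/-- `x ∈ I(K)` is positively dissonant. -/
def PosDissonant [TopologicalSpace M] (φ : Flow ℝ M) (K : Set M) (x : M) : Prop :=
  x ∈ Iset φ K ∧ x ∉ Aset φ K ∧ (Jplus φ x ∩ K).Nonempty

/-- `x ∈ I(K)` is negatively dissonant. -/
def NegDissonant [TopologicalSpace M] (φ : Flow ℝ M) (K : Set M) (x : M) : Prop :=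
  x ∈ Iset φ K ∧ x ∉ Rset φ K ∧ (Jminus φ x ∩ K).Nonempty

/-- `x ∉ I(K)` is externally dissonant. -/
def ExtDissonant [TopologicalSpace M] (φ : Flow ℝ M) (K : Set M) (x : M) : Prop :=
  x ∉ Iset φ K ∧ (Jstar φ x ∩ K ×ˢ K).Nonempty

/-- `x` is a dissonant point of `K`. -/
def Dissonant [TopologicalSpace M] (φ : Flow ℝ M) (K : Set M) (x : M) : Prop :=
  PosDissonant φ K x ∨ NegDissonant φ K x ∨ ExtDissonant φ K x

/-- `N` is an isolating block for `K` with entrance set `Ni` and exit set `No`. -/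
structure IsolatingBlock [TopologicalSpace M] (φ : Flow ℝ M) (K N Ni No : Set M) : Prop where
  compact_N : IsCompact N
  nbhd : K ⊆ interior N
  maximal : ∀ x ∈ N, (∀ t : ℝ, φ t x ∈ N) → x ∈ K
  compact_Ni : IsCompact Ni
  compact_No : IsCompact No
  Ni_sub : Ni ⊆ frontier N
  No_sub : No ⊆ frontier N
  cover : frontier N = Ni ∪ No
  entrance : ∀ x ∈ Ni, ∃ ε > (0:ℝ), ∀ t ∈ Set.Ico (-ε) (0:ℝ), φ t x ∉ N
  exitSet : ∀ x ∈ No, ∃ δ > (0:ℝ), ∀ t ∈ Set.Ioc (0:ℝ) δ, φ t x ∉ N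
  tang_neg : ∀ x ∈ frontier N \ Ni, ∃ ε > (0:ℝ), ∀ t ∈ Set.Ico (-ε) (0:ℝ), φ t x ∈ interior N
  tang_pos : ∀ x ∈ frontier N \ No, ∃ δ > (0:ℝ), ∀ t ∈ Set.Ioc (0:ℝ) δ, φ t x ∈ interior N

/-- `p` is strongly influenced by `K`. -/
def StronglyInfluenced [TopologicalSpace M] (φ : Flow ℝ M) (K : Set M) (p : M) : Prop :=
  ∃ U ∈ 𝓝 p, ∀ V : Set M, K ⊆ interior V → ∃ T : ℝ, 0 ≤ T ∧ ∀ x ∈ U,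
    (∀ t : ℝ, T ≤ t → φ t x ∈ V) ∨ (∀ t : ℝ, t ≤ -T → φ t x ∈ V)

/-- `p` is strongly attracted by `K`. -/
def StronglyAttracted [TopologicalSpace M] (φ : Flow ℝ M) (K : Set M) (p : M) : Prop :=
  ∃ U ∈ 𝓝 p, ∀ V : Set M, K ⊆ interior V → ∃ T : ℝ, 0 ≤ T ∧ ∀ x ∈ U,
    ∀ t : ℝ, T ≤ t → φ t x ∈ V

/-- `p` is strongly repelled by `K`. -/
def StronglyRepelled [TopologicalSpace M] (φ : Flow ℝ M) (K : Set M) (p : M) : Prop :=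
  ∃ U ∈ 𝓝 p, ∀ V : Set M, K ⊆ interior V → ∃ T : ℝ, 0 ≤ T ∧ ∀ x ∈ U,
    ∀ t : ℝ, t ≤ -T → φ t x ∈ V

/-- `K` is (positively) stable. -/
def IsStable [TopologicalSpace M] (φ : Flow ℝ M) (K : Set M) : Prop :=
  ∀ U : Set M, K ⊆ interior U → ∃ V : Set M, K ⊆ interior V ∧ V ⊆ U ∧
    ∀ x ∈ V, ∀ t : ℝ, 0 ≤ t → φ t x ∈ V

/-- `K` is negatively stable. -/
def IsNegStable [TopologicalSpace M] (φ : Flow ℝ M) (K : Set M) : Prop :=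
  ∀ U : Set M, K ⊆ interior U → ∃ V : Set M, K ⊆ interior V ∧ V ⊆ U ∧
    ∀ x ∈ V, ∀ t : ℝ, t ≤ 0 → φ t x ∈ V

/-- `K` is an attractor: stable and attracting some neighborhood. -/
def IsAttractor [TopologicalSpace M] (φ : Flow ℝ M) (K : Set M) : Prop :=
  IsStable φ K ∧ ∃ W : Set M, K ⊆ interior W ∧ W ⊆ Aset φ K

/-- `K` is a repeller: negatively stable and repelling some neighborhood. -/
def IsRepeller [TopologicalSpace M] (φ : Flow ℝ M) (K : Set M) : Prop :=
  IsNegStable φ K ∧ ∃ W : Set M, K ⊆ interior W ∧ W ⊆ Rset φ K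

section AuxLemmas

variable [MetricSpace M]

private lemma cont_time (φ : Flow ℝ M) (x : M) : Continuous fun t : ℝ => φ t x :=
  φ.continuous continuous_id continuous_const

private lemma mem_omegaLim_of_seq (φ : Flow ℝ M) {x z : M} {ts : ℕ → ℝ}
    (hts : Tendsto ts atTop atTop)
    (hlim : Tendsto (fun n => φ (ts n) x) atTop (𝓝 z)) :
    z ∈ omegaLim φ x := by
  rw [omegaLim, Set.mem_iInter₂]
  intro t _
  refine mem_closure_of_tendsto hlim ?_
  filter_upwards [hts.eventually_ge_atTop t] with n hn
  exact ⟨ts n, hn, rfl⟩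

private lemma omegaLim_subset_Jplus (φ : Flow ℝ M) (x : M) :
    omegaLim φ x ⊆ Jplus φ x := by
  intro z hz
  rw [omegaLim, Set.mem_iInter₂] at hz
  have h : ∀ n : ℕ, ∃ s : ℝ, (n : ℝ) ≤ s ∧ dist (φ s x) z < 1 / (n + 1) := by
    intro n
    have h1 : z ∈ closure {y | ∃ s : ℝ, ((n : ℝ) + 1) ≤ s ∧ φ s x = y} :=
      hz ((n : ℝ) + 1) (Set.mem_Ioi.mpr (by positivity))
    obtain ⟨b, ⟨s, hs, rfl⟩, hd⟩ :=
      Metric.mem_closure_iff.mp h1 (1 / (n + 1)) (by positivity)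
    exact ⟨s, by linarith, by rwa [dist_comm] at hd⟩
  choose ts hts hd using h
  refine ⟨fun _ => x, ts, tendsto_const_nhds,
    tendsto_atTop_mono hts tendsto_natCast_atTop_atTop, ?_⟩
  rw [tendsto_iff_dist_tendsto_zero]
  exact squeeze_zero (fun n => dist_nonneg) (fun n => (hd n).le)
    tendsto_one_div_add_atTop_nhds_zero_nat

/-- If `ω(x)` is nonempty and contained in `K`, the forward orbit of `x`
eventually stays in any open set containing `K`. -/
private lemma eventual_confine [LocallyCompactSpace M] (φ : Flow ℝ M) {K : Set M}
    (hK : IsCompact K) {x : M} (hne : (omegaLim φ x).Nonempty)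
    (hsub : omegaLim φ x ⊆ K) {O : Set M} (hO : IsOpen O) (hKO : K ⊆ O) :
    ∃ T : ℝ, 0 ≤ T ∧ ∀ t ≥ T, φ t x ∈ O := by
  obtain ⟨W, hWc, hKW, hWO⟩ := exists_compact_between hK hO hKO
  suffices h : ∃ T : ℝ, 0 ≤ T ∧ ∀ t ≥ T, φ t x ∈ interior W by
    obtain ⟨T, h0, hT⟩ := h
    exact ⟨T, h0, fun t ht => hWO (interior_subset (hT t ht))⟩
  by_contra hcon
  push_neg at hcon
  obtain ⟨z₀, hz₀⟩ := hne
  have hz₀K : z₀ ∈ K := hsub hz₀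
  rw [omegaLim, Set.mem_iInter₂] at hz₀
  have hstep : ∀ k : ℕ, ∃ c : ℝ, (k : ℝ) ≤ c ∧ φ c x ∈ W \ interior W := by
    intro k
    obtain ⟨w, hwo, s, hsk, hws⟩ :=
      _root_.mem_closure_iff.mp (hz₀ ((k : ℝ) + 1) (Set.mem_Ioi.mpr (by positivity)))
        (interior W) isOpen_interior (hKW hz₀K)
    have hs0 : (0 : ℝ) ≤ s := by
      have : (0 : ℝ) ≤ (k : ℝ) := Nat.cast_nonneg k
      linarith
    obtain ⟨t, hts, htO⟩ := hcon s hs0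
    set A : Set ℝ := {u | s ≤ u ∧ φ u x ∉ interior W} with hA
    have hA_closed : IsClosed A :=
      (isClosed_le continuous_const continuous_id).inter
        (isOpen_interior.isClosed_compl.preimage (cont_time φ x))
    have hA_ne : A.Nonempty := ⟨t, hts, htO⟩
    have hA_bdd : BddBelow A := ⟨s, fun u hu => hu.1⟩
    have hcA : sInf A ∈ A := hA_closed.csInf_mem hA_ne hA_bdd
    have hsc : s < sInf A := by
      rcases lt_or_eq_of_le hcA.1 with h | h
      · exact h
      · exact absurd (h ▸ hws ▸ hwo) hcA.2
    have hbefore : ∀ u, s ≤ u → u < sInf A → φ u x ∈ interior W := by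
      intro u h1 h2
      by_contra h3
      exact notMem_of_lt_csInf h2 hA_bdd ⟨h1, h3⟩
    have hclW : φ (sInf A) x ∈ closure W := by
      refine mem_closure_of_tendsto
        (((cont_time φ x).tendsto _).mono_left
          (nhdsWithin_le_nhds (s := Set.Iio (sInf A)))) ?_
      filter_upwards [eventually_nhdsWithin_of_eventually_nhds
        (eventually_gt_nhds hsc), self_mem_nhdsWithin] with u h1 h2
      exact interior_subset (hbefore u h1.le h2)
    rw [hWc.isClosed.closure_eq] at hclW
    exact ⟨sInf A, by linarith, hclW, hcA.2⟩
  choose cs hcs hmem using hstep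
  obtain ⟨z, hzF, ψ, hψ, hliml⟩ := (hWc.diff isOpen_interior).tendsto_subseq hmem
  have hz : z ∈ omegaLim φ x :=
    mem_omegaLim_of_seq φ
      (tendsto_atTop_mono (fun n => le_trans (Nat.cast_le.mpr hψ.le_apply) (hcs (ψ n)))
        tendsto_natCast_atTop_atTop) hliml
  exact hzF.2 (hKW (hsub hz))

/-- Main one-sided theorem. -/
private theorem masterA [LocallyCompactSpace M]
    (φ : Flow ℝ M) (K : Set M)
    (hIso : IsIsolatedInv φ K) (hNS : NonSaddle φ K) (x : M) (hx : x ∉ K) :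
    x ∈ Aset φ K ↔ (Jplus φ x).Nonempty ∧ Jplus φ x ⊆ K := by
  obtain ⟨hKc, hKinv, N, hNc, hKN, hNmax⟩ := hIso
  constructor
  · rintro ⟨hne, hsub⟩
    refine ⟨hne.mono (omegaLim_subset_Jplus φ x), ?_⟩
    intro y hy
    by_contra hyK
    have hO : IsOpen (interior N ∩ {y}ᶜ) :=
      isOpen_interior.inter isClosed_singleton.isOpen_compl
    have hKO : K ⊆ interior N ∩ {y}ᶜ := fun z hz =>
      ⟨hKN hz, fun h => hyK (Set.mem_singleton_iff.mp h ▸ hz)⟩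
    obtain ⟨N', hN'c, hKN', hN'O⟩ := exists_compact_between hKc hO hKO
    have hyN' : y ∉ N' := fun h => (hN'O h).2 rfl
    have hN'N : N' ⊆ N := fun z hz => interior_subset (hN'O hz).1
    obtain ⟨V, hKV, hVN', hdich⟩ := hNS N' hKN'
    obtain ⟨T, hT0, hTconf⟩ :=
      eventual_confine φ hKc hne hsub isOpen_interior hKV
    obtain ⟨xs, ts, hxs, hts, hlim⟩ := hy
    have hev1 : ∀ᶠ n in atTop, φ T (xs n) ∈ V := by
      have htd : Tendsto (fun n => φ T (xs n)) atTop (𝓝 (φ T x)) :=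
        ((φ.continuous_toFun T).tendsto x).comp hxs
      exact htd (mem_of_superset
        (isOpen_interior.mem_nhds (hTconf T le_rfl)) interior_subset)
    have hev2 : ∀ᶠ n in atTop, T ≤ ts n := hts.eventually_ge_atTop T
    by_cases hfreq : ∃ᶠ n in atTop, posOrbit φ (φ T (xs n)) ⊆ N'
    · have hfr : ∃ᶠ n in atTop, φ (ts n) (xs n) ∈ N' := by
        refine (hfreq.and_eventually hev2).mono ?_
        rintro n ⟨hpos, hTn⟩
        have heq : φ (ts n) (xs n) = φ (ts n - T) (φ T (xs n)) := by
          rw [← Flow.map_add]; ring_nf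
        rw [heq]
        exact hpos ⟨ts n - T, by linarith, rfl⟩
      have : y ∈ closure N' := mem_closure_of_frequently_of_tendsto hfr hlim
      rw [hN'c.isClosed.closure_eq] at this
      exact hyN' this
    · have hev3 : ∀ᶠ n in atTop, negOrbit φ (φ T (xs n)) ⊆ N' := by
        filter_upwards [not_frequently.mp hfreq, hev1] with n hn hv
        rcases hdich _ hv with h | h
        · exact absurd h hn
        · exact h
      have horbit : ∀ t : ℝ, φ t x ∈ N := by
        intro t
        rcases le_or_gt t T with h | h
        · have hseq : Tendsto (fun n => φ t (xs n)) atTop (𝓝 (φ t x)) :=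
            ((φ.continuous_toFun t).tendsto x).comp hxs
          have hmem : ∀ᶠ n in atTop, φ t (xs n) ∈ N' := by
            filter_upwards [hev3] with n hn
            have heq : φ t (xs n) = φ (t - T) (φ T (xs n)) := by
              rw [← Flow.map_add]; ring_nf
            rw [heq]
            exact hn ⟨t - T, by linarith, rfl⟩
          exact hN'N (hN'c.isClosed.mem_of_tendsto hseq hmem)
        · exact hN'N (hVN' (interior_subset (hTconf t h.le)))
      have hxN : x ∈ N := by
        have := horbit 0
        rwa [φ.map_zero_apply] at this
      exact absurd (hNmax x hxN horbit) hx
  · rintro ⟨⟨y, hyJ⟩, hJK⟩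
    refine ⟨?_, fun z hz => hJK (omegaLim_subset_Jplus φ x hz)⟩
    by_contra hempty
    rw [Set.not_nonempty_iff_eq_empty] at hempty
    obtain ⟨W, hWc, hKW, -⟩ :=
      exists_compact_between hKc isOpen_univ (Set.subset_univ K)
    have hS : ∃ S : ℝ, 0 ≤ S ∧ ∀ s ≥ S, φ s x ∉ W := by
      by_contra hcon
      push_neg at hcon
      have hstep : ∀ k : ℕ, ∃ s : ℝ, (k : ℝ) ≤ s ∧ φ s x ∈ W := by
        intro k
        obtain ⟨s, hs1, hs2⟩ := hcon (max (k : ℝ) 0) (le_max_right _ _)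
        exact ⟨s, le_trans (le_max_left _ _) hs1, hs2⟩
      choose ss hss hmem using hstep
      obtain ⟨z, hzW, ψ, hψ, hlim2⟩ := hWc.tendsto_subseq hmem
      have hzo : z ∈ omegaLim φ x :=
        mem_omegaLim_of_seq φ
          (tendsto_atTop_mono
            (fun n => le_trans (Nat.cast_le.mpr hψ.le_apply) (hss (ψ n)))
            tendsto_natCast_atTop_atTop) hlim2
      rw [hempty] at hzo
      exact hzo
    obtain ⟨S, hS0, hSout⟩ := hS
    obtain ⟨xs, ts, hxs, hts, hlim⟩ := hyJ
    have hyK : y ∈ K := hJK ⟨xs, ts, hxs, hts, hlim⟩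
    have hev1 : ∀ᶠ n in atTop, φ S (xs n) ∉ W := by
      have htd : Tendsto (fun n => φ S (xs n)) atTop (𝓝 (φ S x)) :=
        ((φ.continuous_toFun S).tendsto x).comp hxs
      exact htd (hWc.isClosed.isOpen_compl.mem_nhds (hSout S le_rfl))
    have hev2 : ∀ᶠ n in atTop, φ (ts n) (xs n) ∈ W :=
      hlim (mem_of_superset (isOpen_interior.mem_nhds (hKW hyK)) interior_subset)
    have hev3 : ∀ᶠ n in atTop, S + 1 ≤ ts n := hts.eventually_ge_atTop _
    obtain ⟨N₀, hN₀⟩ := eventually_atTop.mp (hev1.and (hev2.and hev3))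
    set x' : ℕ → M := fun n => xs (n + N₀) with hx'def
    set t' : ℕ → ℝ := fun n => ts (n + N₀) with ht'def
    have hx' : Tendsto x' atTop (𝓝 x) := hxs.comp (tendsto_add_atTop_nat N₀)
    have hp1 : ∀ n, φ S (x' n) ∉ W := fun n => (hN₀ (n + N₀) le_add_self).1
    have hp2 : ∀ n, φ (t' n) (x' n) ∈ W := fun n => (hN₀ (n + N₀) le_add_self).2.1
    have hp3 : ∀ n, S + 1 ≤ t' n := fun n => (hN₀ (n + N₀) le_add_self).2.2
    have hstep : ∀ n, ∃ c : ℝ, S < c ∧ φ c (x' n) ∈ W \ interior W := by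
      intro n
      set A : Set ℝ := {u | S ≤ u ∧ φ u (x' n) ∈ W} with hA
      have hA_closed : IsClosed A :=
        (isClosed_le continuous_const continuous_id).inter
          (hWc.isClosed.preimage (cont_time φ (x' n)))
      have hA_ne : A.Nonempty := ⟨t' n, by linarith [hp3 n], hp2 n⟩
      have hA_bdd : BddBelow A := ⟨S, fun u hu => hu.1⟩
      have hcA : sInf A ∈ A := hA_closed.csInf_mem hA_ne hA_bdd
      have hSc : S < sInf A := by
        rcases lt_or_eq_of_le hcA.1 with h | h
        · exact h
        · exact absurd (h ▸ hcA.2) (hp1 n)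
      have hbefore : ∀ u, S ≤ u → u < sInf A → φ u (x' n) ∉ W := by
        intro u h1 h2 h3
        exact notMem_of_lt_csInf h2 hA_bdd ⟨h1, h3⟩
      have hclo : φ (sInf A) (x' n) ∈ closure Wᶜ := by
        refine mem_closure_of_tendsto
          (((cont_time φ (x' n)).tendsto _).mono_left
            (nhdsWithin_le_nhds (s := Set.Iio (sInf A)))) ?_
        filter_upwards [eventually_nhdsWithin_of_eventually_nhds
          (eventually_gt_nhds hSc), self_mem_nhdsWithin] with u h1 h2
        exact hbefore u h1.le h2
      rw [closure_compl] at hclo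
      exact ⟨sInf A, hSc, hcA.2, hclo⟩
    choose cs hcs1 hcsF using hstep
    by_cases hcT : Tendsto cs atTop atTop
    · obtain ⟨z, hzF, ψ, hψ, hliml⟩ :=
        (hWc.diff isOpen_interior).tendsto_subseq hcsF
      have hzJ : z ∈ Jplus φ x :=
        ⟨x' ∘ ψ, cs ∘ ψ, hx'.comp hψ.tendsto_atTop, hcT.comp hψ.tendsto_atTop, hliml⟩
      exact hzF.2 (hKW (hJK hzJ))
    · rw [tendsto_atTop] at hcT
      push_neg at hcT
      obtain ⟨b, hb⟩ := hcT
      obtain ⟨ψ, hψ, hψb⟩ := Filter.extraction_of_frequently_atTop hb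
      obtain ⟨c₀, hc₀, ρ, hρ, hcl⟩ :=
        (isCompact_Icc (a := S) (b := b)).tendsto_subseq
          (x := fun k => cs (ψ k))
          (fun k => ⟨(hcs1 (ψ k)).le, (hψb k).le⟩)
      have hxx : Tendsto (fun k => x' (ψ (ρ k))) atTop (𝓝 x) :=
        hx'.comp ((hψ.comp hρ).tendsto_atTop)
      have hj : Tendsto (fun k => φ (cs (ψ (ρ k))) (x' (ψ (ρ k)))) atTop
          (𝓝 (φ c₀ x)) :=
        (φ.cont'.tendsto (c₀, x)).comp (hcl.prodMk_nhds hxx)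
      have hW : φ c₀ x ∈ W :=
        (((hWc.diff isOpen_interior).isClosed).mem_of_tendsto hj
          (Filter.Eventually.of_forall fun k => hcsF (ψ (ρ k)))).1
      exact hSout c₀ hc₀.1 hW

/-! Time reversal lemmas. -/

private lemma reverse_posOrbit (φ : Flow ℝ M) (z : M) :
    posOrbit φ.reverse z = negOrbit φ z := by
  ext y
  constructor
  · rintro ⟨t, ht, rfl⟩; exact ⟨-t, by linarith, rfl⟩
  · rintro ⟨t, ht, rfl⟩
    exact ⟨-t, by linarith, show φ (- -t) z = φ t z by rw [neg_neg]⟩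

private lemma reverse_negOrbit (φ : Flow ℝ M) (z : M) :
    negOrbit φ.reverse z = posOrbit φ z := by
  ext y
  constructor
  · rintro ⟨t, ht, rfl⟩; exact ⟨-t, by linarith, rfl⟩
  · rintro ⟨t, ht, rfl⟩
    exact ⟨-t, by linarith, show φ (- -t) z = φ t z by rw [neg_neg]⟩

private lemma reverse_omegaLim (φ : Flow ℝ M) (x : M) :
    omegaLim φ.reverse x = alphaLim φ x := by
  unfold omegaLim alphaLim
  ext z
  simp only [Set.mem_iInter, Set.mem_Ioi, Set.mem_Iio]
  have hset : ∀ t : ℝ,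
      {y | ∃ s : ℝ, t ≤ s ∧ φ.reverse s x = y} = {y | ∃ s : ℝ, s ≤ -t ∧ φ s x = y} := by
    intro t
    ext y
    constructor
    · rintro ⟨s, hs, rfl⟩; exact ⟨-s, by linarith, rfl⟩
    · rintro ⟨s, hs, rfl⟩
      exact ⟨-s, by linarith, show φ (- -s) x = φ s x by rw [neg_neg]⟩
  constructor
  · intro h t ht
    have := h (-t) (by linarith)
    rwa [hset, neg_neg] at this
  · intro h t ht
    rw [hset]
    exact h (-t) (by linarith)

private lemma reverse_Jplus (φ : Flow ℝ M) (x : M) :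
    Jplus φ.reverse x = Jminus φ x := by
  ext z
  constructor
  · rintro ⟨xs, ts, h1, h2, h3⟩
    exact ⟨xs, fun n => -(ts n), h1, tendsto_neg_atTop_atBot.comp h2, h3⟩
  · rintro ⟨xs, ts, h1, h2, h3⟩
    refine ⟨xs, fun n => -(ts n), h1, tendsto_neg_atBot_atTop.comp h2, ?_⟩
    show Tendsto (fun n => φ (- - ts n) (xs n)) atTop (𝓝 z)
    simpa only [neg_neg] using h3

private lemma reverse_iso (φ : Flow ℝ M) (K : Set M) (h : IsIsolatedInv φ K) :
    IsIsolatedInv φ.reverse K := by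
  obtain ⟨h1, h2, N, hNc, hKN, hNmax⟩ := h
  refine ⟨h1, fun z hz t => h2 z hz (-t), N, hNc, hKN, fun z hz ht => ?_⟩
  refine hNmax z hz fun t => ?_
  have := ht (-t)
  rwa [show φ.reverse (-t) z = φ t z from by
    show φ (- -t) z = φ t z; rw [neg_neg]] at this

private lemma reverse_ns (φ : Flow ℝ M) (K : Set M) (h : NonSaddle φ K) :
    NonSaddle φ.reverse K := by
  intro U hU
  obtain ⟨V, hKV, hVU, hd⟩ := h U hU
  refine ⟨V, hKV, hVU, fun z hz => ?_⟩
  rw [reverse_posOrbit, reverse_negOrbit]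
  exact (hd z hz).symm

end AuxLemmas

/-- for `x ∉ K`: `x ∈ A(K)` iff `J⁺(x)` is nonempty and contained in `K`,
and `x ∈ R(K)` iff `J⁻(x)` is nonempty and contained in `K`. -/
theorem stmt10 {M : Type*} [MetricSpace M] [LocallyCompactSpace M]
    (φ : Flow ℝ M) (K : Set M)
    (hIso : IsIsolatedInv φ K) (hNS : NonSaddle φ K) (x : M) (hx : x ∉ K) :
    (x ∈ Aset φ K ↔ (Jplus φ x).Nonempty ∧ Jplus φ x ⊆ K) ∧
    (x ∈ Rset φ K ↔ (Jminus φ x).Nonempty ∧ Jminus φ x ⊆ K) := by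
  refine ⟨masterA φ K hIso hNS x hx, ?_⟩
  have h2 := masterA φ.reverse K (reverse_iso φ K hIso) (reverse_ns φ K hNS) x hx
  rw [reverse_Jplus] at h2
  have hAR : x ∈ Aset φ.reverse K ↔ x ∈ Rset φ K := by
    simp only [Aset, Rset, Set.mem_setOf_eq, reverse_omegaLim]
  exact hAR.symm.trans h2
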